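/- Assume N ≥ 3 and let m := #{(k,q) : 1 ≤ k ≤ q ≤ K}. For a parameter θ = (β, u) with β > 0 and u ∈ (0,∞)^{N×K}, define the joint density f_θ on ℕ^Ω × [0,∞)^m by f_θ(A, (w_{kq})_{k≤q}) := (∏_{e∈Ω} Pois(A_e; λ_e(u,w)/κ_e)) · ∏_{k≤q} β e^{−β w_{kq}}, where w is the symmetric K×K matrix determined by the upper-triangular entries (w_{kq})_{k≤q}. If θ₀ = (β₀, u₀) and θ₁ = (β₁, u₁) are two such parameters with θ₀ ≠ θ₁, then f_{θ₀} and f_{θ₁} differ on a set of positive measure with respect to the product of counting measure on ℕ^Ω and Lebesgue measure on [0,∞)^m. -/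

import Mathlib

open MeasureTheory

/-- The bilinear interaction `u_i^T w u_j = Σ_{k,q} u_{ik} w_{kq} u_{jq}`. -/
noncomputable def bilin {N K : ℕ} (u : Fin N → Fin K → ℝ) (w : Fin K → Fin K → ℝ)
    (i j : Fin N) : ℝ :=
  ∑ k, ∑ q, u i k * w k q * u j q

/-- The Poisson mean of a hyperedge: `λ_e(u,w) = Σ_{i<j ∈ e} u_i^T w u_j`. -/
noncomputable def lam {N K : ℕ} (u : Fin N → Fin K → ℝ) (w : Fin K → Fin K → ℝ)
    (e : Finset (Fin N)) : ℝ :=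
  ∑ i ∈ e, ∑ j ∈ e, if i < j then bilin u w i j else 0

/-- Poisson probability mass: `Pois(a; λ) = λ^a e^{-λ} / a!`. -/
noncomputable def pois (a : ℕ) (l : ℝ) : ℝ := l ^ a * Real.exp (-l) / (Nat.factorial a : ℝ)

/-- The symmetric `K×K` matrix determined by its upper-triangular entries. -/
noncomputable def symOfUpper {K : ℕ} (v : {p : Fin K × Fin K // p.1 ≤ p.2} → ℝ) :
    Fin K → Fin K → ℝ :=
  fun k q => if h : k ≤ q then v ⟨(k, q), h⟩ else v ⟨(q, k), le_of_not_ge h⟩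

/-- The half-Bayesian joint density on `ℕ^Ω × [0,∞)^m` for parameter `θ = (β, u)`:
`f_θ(A, (w_{kq})_{k≤q}) = (∏_{e∈Ω} Pois(A_e; λ_e(u,w)/κ_e)) · ∏_{k≤q} β e^{−β w_{kq}}`. -/
noncomputable def halfBayesDensity {N K D : ℕ} (κ : ℕ → ℝ) (β : ℝ)
    (u : Fin N → Fin K → ℝ)
    (x : ({e : Finset (Fin N) // 2 ≤ e.card ∧ e.card ≤ D} → ℕ) ×
         ({p : Fin K × Fin K // p.1 ≤ p.2} → ℝ)) : ℝ :=
  (∏ e : {e : Finset (Fin N) // 2 ≤ e.card ∧ e.card ≤ D},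
      pois (x.1 e) (lam u (symOfUpper x.2) e.1 / κ e.1.card))
    * ∏ p : {p : Fin K × Fin K // p.1 ≤ p.2}, β * Real.exp (-β * x.2 p)

-- auxiliary lemmas

lemma pois_zero' (l : ℝ) : pois 0 l = Real.exp (-l) := by simp [pois]

lemma pois_one' (l : ℝ) : pois 1 l = l * pois 0 l := by
  simp only [pois, pow_one, pow_zero, Nat.factorial_one, Nat.factorial_zero, Nat.cast_one, one_mul, div_one]

lemma symOfUpper_cont {K : ℕ} (k q : Fin K) :
    Continuous fun v : {p : Fin K × Fin K // p.1 ≤ p.2} → ℝ => symOfUpper v k q := by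
  unfold symOfUpper
  by_cases h : k ≤ q <;> simp only [h, dite_true, dite_false] <;> exact continuous_apply _

lemma cont_density {N K D : ℕ} (κ : ℕ → ℝ) (β : ℝ) (u : Fin N → Fin K → ℝ)
    (A : {e : Finset (Fin N) // 2 ≤ e.card ∧ e.card ≤ D} → ℕ) :
    Continuous fun v : {p : Fin K × Fin K // p.1 ≤ p.2} → ℝ =>
      halfBayesDensity (D := D) κ β u (A, v) := by
  have hbilin : ∀ i j : Fin N, Continuous fun v : {p : Fin K × Fin K // p.1 ≤ p.2} → ℝ =>
      bilin u (symOfUpper v) i j := by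
    intro i j
    unfold bilin
    exact continuous_finset_sum _ fun k _ => continuous_finset_sum _ fun q _ =>
      (continuous_const.mul (symOfUpper_cont k q)).mul continuous_const
  have hlam : ∀ e : Finset (Fin N), Continuous fun v : {p : Fin K × Fin K // p.1 ≤ p.2} → ℝ =>
      lam u (symOfUpper v) e := by
    intro e
    unfold lam
    refine continuous_finset_sum _ fun i _ => continuous_finset_sum _ fun j _ => ?_
    by_cases h : i < j <;> simp only [h, if_true, if_false]
    · exact hbilin i j
    · exact continuous_const
  have hpois : ∀ a : ℕ, Continuous fun l : ℝ => pois a l := by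
    intro a; unfold pois
    exact ((continuous_pow a).mul (Real.continuous_exp.comp continuous_neg)).div_const _
  unfold halfBayesDensity
  refine Continuous.mul ?_ ?_
  · exact continuous_finset_prod _ fun e _ => (hpois (A e)).comp ((hlam e.1).div_const _)
  · exact continuous_finset_prod _ fun p _ =>
      continuous_const.mul (Real.continuous_exp.comp (continuous_const.mul (continuous_apply p)))

section comp
variable {N K D : ℕ} (κ : ℕ → ℝ) (β : ℝ) (u : Fin N → Fin K → ℝ)
  (v : {p : Fin K × Fin K // p.1 ≤ p.2} → ℝ)

lemma hB_zero :
    halfBayesDensity (D := D) κ β u ((fun _ => 0), v)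
      = (∏ e : {e : Finset (Fin N) // 2 ≤ e.card ∧ e.card ≤ D},
          pois 0 (lam u (symOfUpper v) e.1 / κ e.1.card))
        * ∏ p : {p : Fin K × Fin K // p.1 ≤ p.2}, β * Real.exp (-β * v p) := rfl

lemma hB_zero_pos (hβ : 0 < β) :
    0 < halfBayesDensity (D := D) κ β u ((fun _ => 0), v) := by
  rw [hB_zero]
  apply mul_pos
  · exact Finset.prod_pos fun e _ => by rw [pois_zero']; exact Real.exp_pos _
  · exact Finset.prod_pos fun p _ => mul_pos hβ (Real.exp_pos _)

lemma hB_single (e : {e : Finset (Fin N) // 2 ≤ e.card ∧ e.card ≤ D}) :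
    halfBayesDensity (D := D) κ β u ((fun e' => if e' = e then 1 else 0), v)
      = (lam u (symOfUpper v) e.1 / κ e.1.card)
        * halfBayesDensity (D := D) κ β u ((fun _ => 0), v) := by
  unfold halfBayesDensity
  have key : (∏ e' : {e : Finset (Fin N) // 2 ≤ e.card ∧ e.card ≤ D},
        pois (if e' = e then 1 else 0) (lam u (symOfUpper v) e'.1 / κ e'.1.card))
      = (lam u (symOfUpper v) e.1 / κ e.1.card)
        * ∏ e' : {e : Finset (Fin N) // 2 ≤ e.card ∧ e.card ≤ D},
            pois 0 (lam u (symOfUpper v) e'.1 / κ e'.1.card) := by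
    calc (∏ e' : {e : Finset (Fin N) // 2 ≤ e.card ∧ e.card ≤ D},
        pois (if e' = e then 1 else 0) (lam u (symOfUpper v) e'.1 / κ e'.1.card))
        = ∏ e' : {e : Finset (Fin N) // 2 ≤ e.card ∧ e.card ≤ D},
            (if e' = e then lam u (symOfUpper v) e'.1 / κ e'.1.card else 1)
              * pois 0 (lam u (symOfUpper v) e'.1 / κ e'.1.card) := by
          refine Finset.prod_congr rfl fun e' _ => ?_
          split_ifs with h
          · exact pois_one' _
          · exact (one_mul _).symm
      _ = (∏ e' : {e : Finset (Fin N) // 2 ≤ e.card ∧ e.card ≤ D},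
            if e' = e then lam u (symOfUpper v) e'.1 / κ e'.1.card else 1)
          * ∏ e' : {e : Finset (Fin N) // 2 ≤ e.card ∧ e.card ≤ D},
              pois 0 (lam u (symOfUpper v) e'.1 / κ e'.1.card) := Finset.prod_mul_distrib
      _ = _ := by rw [Finset.prod_ite_eq']; simp
  simp only at key ⊢
  rw [key]; ring

lemma symOfUpper_zero : symOfUpper (fun _ : {p : Fin K × Fin K // p.1 ≤ p.2} => (0:ℝ))
    = fun _ _ => 0 := by
  funext k q; unfold symOfUpper; split <;> rfl

lemma hB_at_zero :
    halfBayesDensity (D := D) κ β u ((fun _ => 0), (fun _ => 0))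
      = β ^ Fintype.card {p : Fin K × Fin K // p.1 ≤ p.2} := by
  rw [hB_zero, symOfUpper_zero]
  simp [lam, bilin, pois, Finset.prod_const, Finset.card_univ]

lemma lam_pair (w : Fin K → Fin K → ℝ) {i j : Fin N} (hij : i < j) :
    lam u w {i, j} = bilin u w i j := by
  unfold lam
  rw [Finset.sum_pair (ne_of_lt hij), Finset.sum_pair (ne_of_lt hij),
    Finset.sum_pair (ne_of_lt hij)]
  simp [hij, lt_irrefl, lt_asymm hij]

lemma symOfUpper_delta (k k' q' : Fin K) :
    symOfUpper (fun p : {p : Fin K × Fin K // p.1 ≤ p.2} =>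
        if p = ⟨(k, k), le_rfl⟩ then (1:ℝ) else 0) k' q'
      = if k' = k ∧ q' = k then 1 else 0 := by
  unfold symOfUpper
  split_ifs with h h1 h2 <;>
    simp_all [Subtype.ext_iff, Prod.ext_iff] <;> tauto

lemma bilin_delta (k : Fin K) (i j : Fin N) :
    bilin u (symOfUpper (fun p : {p : Fin K × Fin K // p.1 ≤ p.2} =>
        if p = ⟨(k, k), le_rfl⟩ then (1:ℝ) else 0)) i j = u i k * u j k := by
  unfold bilin
  simp only [symOfUpper_delta, mul_ite, ite_mul, mul_one, mul_zero, zero_mul, ite_and]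
  rw [Finset.sum_eq_single k]
  · rw [Finset.sum_eq_single k] <;> simp +contextual
  · intro b _ hb; simp [hb]
  · simp

end comp


lemma slice_ae {α : Type*} [MeasurableSpace α] [Countable α] [MeasurableSingletonClass α]
    {β' : Type*} [MeasurableSpace β'] {μ : Measure β'} [SFinite μ]
    {f g : α × β' → ℝ} (h : f =ᵐ[(Measure.count : Measure α).prod μ] g) (a : α) :
    (fun b => f (a, b)) =ᵐ[μ] fun b => g (a, b) := by
  have h2 := Measure.ae_ae_of_ae_prod h
  by_contra hc
  have h3 : Measure.count {x : α | ¬ ∀ᵐ b ∂μ, f (x, b) = g (x, b)} = 0 := ae_iff.mp h2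
  have h4 : ({a} : Set α) ⊆ {x : α | ¬ ∀ᵐ b ∂μ, f (x, b) = g (x, b)} := by
    intro x hx
    simp only [Set.mem_singleton_iff] at hx
    subst hx
    exact hc
  have h5 := measure_mono_null h4 h3
  rw [Measure.count_singleton] at h5
  exact one_ne_zero h5

lemma eq_on_orthant {ι : Type*} [Fintype ι] {f g : (ι → ℝ) → ℝ}
    (hf : Continuous f) (hg : Continuous g)
    (h : f =ᵐ[(volume : Measure (ι → ℝ)).restrict {v | ∀ p, 0 ≤ v p}] g) :
    ∀ v, (∀ p, 0 ≤ v p) → f v = g v := by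
  intro v hv
  by_contra hne
  have hUopen : IsOpen {w : ι → ℝ | f w ≠ g w} := isOpen_ne_fun hf hg
  obtain ⟨r, hr, hball⟩ := Metric.isOpen_iff.mp hUopen v hne
  set w : ι → ℝ := fun p => v p + r / 2 with hw
  have hwb : w ∈ Metric.ball v r := by
    rw [Metric.mem_ball, dist_pi_lt_iff hr]
    intro p
    simp only [hw, Real.dist_eq]
    rw [show v p + r / 2 - v p = r / 2 by ring, abs_of_pos (by linarith)]
    linarith
  have hwpos : ∀ p, 0 < w p := fun p => by
    have := hv p; simp only [hw]; linarith
  have hPopen : IsOpen {x : ι → ℝ | ∀ p, 0 < x p} := by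
    have : {x : ι → ℝ | ∀ p, 0 < x p} = ⋂ p, (fun x : ι → ℝ => x p) ⁻¹' Set.Ioi 0 := by
      ext x; simp [Set.mem_iInter]
    rw [this]
    exact isOpen_iInter_of_finite fun p => isOpen_Ioi.preimage (continuous_apply p)
  have hTopen : IsOpen ({w : ι → ℝ | f w ≠ g w} ∩ {x | ∀ p, 0 < x p}) :=
    hUopen.inter hPopen
  have hTne : ({w : ι → ℝ | f w ≠ g w} ∩ {x | ∀ p, 0 < x p}).Nonempty :=
    ⟨w, hball hwb, hwpos⟩
  have hpos := hTopen.measure_pos (volume : Measure (ι → ℝ)) hTne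
  have h0 : volume ({w : ι → ℝ | f w ≠ g w} ∩ {v | ∀ p, 0 ≤ v p}) = 0 := by
    rw [← Measure.restrict_apply hUopen.measurableSet]
    exact ae_iff.mp h
  have hsub : ({w : ι → ℝ | f w ≠ g w} ∩ {x | ∀ p, 0 < x p}) ⊆
      ({w : ι → ℝ | f w ≠ g w} ∩ {v | ∀ p, 0 ≤ v p}) :=
    Set.inter_subset_inter_right _ fun x hx p => (hx p).le
  exact absurd (measure_mono_null hsub h0) hpos.ne'


/-- Identifiability of the half-Bayesian model: if `N ≥ 3` and `(β₀,u₀) ≠ (β₁,u₁)`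
(with `β` positive rates and `u` entrywise positive), then the joint densities
`f_{θ₀}` and `f_{θ₁}` differ on a set of positive measure with respect to the product
of counting measure on `ℕ^Ω` and Lebesgue measure on `[0,∞)^m`. -/
theorem stmt_1 {N K D : ℕ} (hN : 3 ≤ N) (hK : 1 ≤ K) (hD2 : 2 ≤ D) (hDN : D ≤ N)
    (κ : ℕ → ℝ) (hκ : ∀ n, 2 ≤ n → n ≤ D → 0 < κ n)
    (β₀ β₁ : ℝ) (hβ₀ : 0 < β₀) (hβ₁ : 0 < β₁)
    (u₀ u₁ : Fin N → Fin K → ℝ)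
    (hu₀ : ∀ i k, 0 < u₀ i k) (hu₁ : ∀ i k, 0 < u₁ i k)
    (hθ : (β₀, u₀) ≠ (β₁, u₁)) :
    ¬ (halfBayesDensity (N := N) (K := K) (D := D) κ β₀ u₀
        =ᵐ[(Measure.count :
              Measure ({e : Finset (Fin N) // 2 ≤ e.card ∧ e.card ≤ D} → ℕ)).prod
            ((volume : Measure ({p : Fin K × Fin K // p.1 ≤ p.2} → ℝ)).restrict
              {v | ∀ p, 0 ≤ v p})]
      halfBayesDensity (N := N) (K := K) (D := D) κ β₁ u₁) := by
  intro hae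
  have Heq : ∀ (A : {e : Finset (Fin N) // 2 ≤ e.card ∧ e.card ≤ D} → ℕ)
      (v : {p : Fin K × Fin K // p.1 ≤ p.2} → ℝ), (∀ p, 0 ≤ v p) →
      halfBayesDensity (D := D) κ β₀ u₀ (A, v) = halfBayesDensity (D := D) κ β₁ u₁ (A, v) :=
    fun A => eq_on_orthant (cont_density κ β₀ u₀ A) (cont_density κ β₁ u₁ A)
      (slice_ae hae A)
  -- β₀ = β₁
  have hm : Fintype.card {p : Fin K × Fin K // p.1 ≤ p.2} ≠ 0 := by
    have : Nonempty {p : Fin K × Fin K // p.1 ≤ p.2} :=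
      ⟨⟨(⟨0, hK⟩, ⟨0, hK⟩), le_rfl⟩⟩
    exact Fintype.card_ne_zero
  have hβ : β₀ = β₁ := by
    have h0 := Heq (fun _ => 0) (fun _ => 0) (fun _ => le_rfl)
    rw [hB_at_zero, hB_at_zero] at h0
    exact (pow_left_strictMonoOn₀ hm).injOn hβ₀.le hβ₁.le h0
  -- lam equality
  have hlam_eq : ∀ (e : {e : Finset (Fin N) // 2 ≤ e.card ∧ e.card ≤ D})
      (v : {p : Fin K × Fin K // p.1 ≤ p.2} → ℝ), (∀ p, 0 ≤ v p) →
      lam u₀ (symOfUpper v) e.1 = lam u₁ (symOfUpper v) e.1 := by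
    intro e v hv
    have h0 := Heq (fun _ => 0) v hv
    have h1 := Heq (fun e' => if e' = e then 1 else 0) v hv
    rw [hB_single, hB_single, ← h0] at h1
    have hpos := hB_zero_pos (D := D) κ β₀ u₀ v hβ₀
    have h2 := mul_right_cancel₀ hpos.ne' h1
    have hκpos : 0 < κ e.1.card := hκ _ e.2.1 e.2.2
    rw [div_eq_div_iff hκpos.ne' hκpos.ne'] at h2
    exact mul_right_cancel₀ hκpos.ne' h2
  -- product identities
  have hprodlt : ∀ i j : Fin N, i < j → ∀ k, u₀ i k * u₀ j k = u₁ i k * u₁ j k := by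
    intro i j hij k
    have hcard : ({i, j} : Finset (Fin N)).card = 2 := Finset.card_pair (ne_of_lt hij)
    have he : 2 ≤ ({i, j} : Finset (Fin N)).card ∧ ({i, j} : Finset (Fin N)).card ≤ D := by
      rw [hcard]; exact ⟨le_rfl, hD2⟩
    have hv : ∀ p : {p : Fin K × Fin K // p.1 ≤ p.2},
        0 ≤ (fun p : {p : Fin K × Fin K // p.1 ≤ p.2} =>
          if p = ⟨(k, k), le_rfl⟩ then (1:ℝ) else 0) p := by
      intro p; dsimp only; split <;> norm_num
    have h := hlam_eq ⟨{i, j}, he⟩ _ hv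
    simp only at h
    rw [lam_pair u₀ _ hij, lam_pair u₁ _ hij, bilin_delta, bilin_delta] at h
    exact h
  have hprodne : ∀ i j : Fin N, i ≠ j → ∀ k, u₀ i k * u₀ j k = u₁ i k * u₁ j k := by
    intro i j hij k
    rcases hij.lt_or_gt with h | h
    · exact hprodlt i j h k
    · have := hprodlt j i h k; linear_combination this
  -- conclude u₀ = u₁
  have hnt : Nontrivial (Fin N) := Fin.nontrivial_iff_two_le.mpr (by omega)
  have hu : u₀ = u₁ := by
    funext i k
    obtain ⟨j, hj⟩ := exists_ne i
    obtain ⟨l, hl1, hl2⟩ : ∃ l : Fin N, l ≠ i ∧ l ≠ j := by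
      by_contra hcon
      push_neg at hcon
      have hsub : (Finset.univ : Finset (Fin N)) ⊆ {i, j} := by
        intro x _
        simp only [Finset.mem_insert, Finset.mem_singleton]
        by_cases hx : x = i
        · exact Or.inl hx
        · exact Or.inr (hcon x hx)
      have hc1 := Finset.card_le_card hsub
      have hc2 : ({i, j} : Finset (Fin N)).card ≤ 2 :=
        le_trans (Finset.card_insert_le _ _) (by simp)
      simp only [Finset.card_univ, Fintype.card_fin] at hc1
      omega
    have h1 := hprodne i j (Ne.symm hj) k
    have h2 := hprodne i l (Ne.symm hl1) k
    have h3 := hprodne j l (fun h => hl2 h.symm) k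
    have key : u₀ i k ^ 2 * (u₀ j k * u₀ l k) = u₁ i k ^ 2 * (u₁ j k * u₁ l k) := by
      linear_combination (u₀ i k * u₀ l k) * h1 + (u₁ i k * u₁ j k) * h2
    rw [h3] at key
    have hpos : 0 < u₁ j k * u₁ l k := mul_pos (hu₁ j k) (hu₁ l k)
    have key2 : u₀ i k ^ 2 = u₁ i k ^ 2 := mul_right_cancel₀ hpos.ne' key
    exact (pow_left_strictMonoOn₀ (two_ne_zero)).injOn (hu₀ i k).le (hu₁ i k).le key2
  exact hθ (Prod.ext hβ hu)
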